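/- Let H be a graph with E(H) ≠ ∅, let F be an edge-colored complete graph on n ≥ 5|V(H)| vertices, and let u, v be two distinct vertices of F. Suppose the edge-coloring of F is such that the induced edge-colored subgraph F − {u, v} is rainbow, and all the edges between {u, v} and V(F) \ {u, v} receive pairwise distinct colors (i.e., they form a rainbow copy of K_{2, n−2}). Then for every color assigned to the edge uv, F contains a rainbow copy of H containing the edge uv. -/
import Mathlib


open SimpleGraph

/-- The edge-colored graph `(G, c)` contains a rainbow copy of `H`
passing through the edge `e`. -/
def IsRainbowCopyThrough {W V : Type*} (H : SimpleGraph W) (G : SimpleGraph V)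
    (c : Sym2 V → ℕ) (e : Sym2 V) : Prop :=
  ∃ f : W → V, Function.Injective f ∧
    (∀ ⦃a b⦄, H.Adj a b → G.Adj (f a) (f b)) ∧
    (∀ ⦃a b a' b'⦄, H.Adj a b → H.Adj a' b' →
      c s(f a, f b) = c s(f a', f b') → s(a, b) = s(a', b')) ∧
    ∃ a b, H.Adj a b ∧ e = s(f a, f b)

/-- The edge-colored graph `(G, c)` is weakly `H`-rainbow saturated: there is an
ordering `L` of the non-edges of `G` such that for every list `cs` of pairwise
distinct colors, adding the non-edges one at a time (the `i`-th one in color `cs i`)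
always creates a new rainbow copy of `H` through the added edge. -/
def WeaklyRainbowSat {W V : Type*} [DecidableEq V] (H : SimpleGraph W)
    (G : SimpleGraph V) (c : Sym2 V → ℕ) : Prop :=
  ∃ L : List (Sym2 V), L.Nodup ∧ (∀ e, e ∈ L ↔ e ∈ Gᶜ.edgeSet) ∧
    ∀ cs : List ℕ, cs.length = L.length → cs.Nodup →
      ∀ i : Fin L.length,
        IsRainbowCopyThrough H
          (G ⊔ SimpleGraph.fromEdgeSet {e | e ∈ L.take ((i : ℕ) + 1)})
          (((L.zip cs).take ((i : ℕ) + 1)).foldl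
            (fun c' p => Function.update c' p.1 p.2) c)
          (L.get i)

/-- The weak rainbow saturation number `rwsat(n, H)`: the minimum number of edges
in a weakly `H`-rainbow saturated edge-colored graph on `n` vertices, where by
convention the value is `n.choose 2` if no such graph exists. -/
noncomputable def rwsat {W : Type*} (H : SimpleGraph W) (n : ℕ) : ℕ :=
  sInf ({m | ∃ (G : SimpleGraph (Fin n)) (c : Sym2 (Fin n) → ℕ),
    WeaklyRainbowSat H G c ∧ G.edgeSet.ncard = m} ∪ {n.choose 2})

/-- `δ'(H)`: the minimum degree among vertices of nonzero degree. -/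
noncomputable def minPosDeg {W : Type*} (H : SimpleGraph W) : ℕ :=
  sInf {d | ∃ v, (H.neighborSet v).ncard = d ∧ d ≠ 0}

/-- `A` is contained in `B` as a subgraph (there is an injective graph
homomorphism from `A` to `B`). -/
def ContainsCopy {α β : Type*} (A : SimpleGraph α) (B : SimpleGraph β) : Prop :=
  ∃ f : α → β, Function.Injective f ∧ ∀ ⦃a b⦄, A.Adj a b → B.Adj (f a) (f b)

/-- The Turán number `ex(N, ℋ)` of the family `ℋ = {H - {u, v} : uv ∈ E(H)}`:
the maximum number of edges of an `N`-vertex graph containing no member of `ℋ`. -/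
noncomputable def exFam {W : Type*} (H : SimpleGraph W) (N : ℕ) : ℕ :=
  sSup {m | ∃ G : SimpleGraph (Fin N),
    (∀ u v : W, H.Adj u v → ¬ ContainsCopy (H.induce ({u, v}ᶜ : Set W)) G) ∧
    G.edgeSet.ncard = m}

/-- `f(H)`: the smallest `n` such that for each `N ∈ {n-1, n}` one has
`ex(N, ℋ) ≤ C(N,2) - 2N - 2`. -/
noncomputable def fH {W : Type*} (H : SimpleGraph W) : ℕ :=
  sInf {n | ∀ N ∈ ({n - 1, n} : Set ℕ),
    (exFam H N : ℤ) ≤ (N.choose 2 : ℤ) - 2 * N - 2}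

/-- The coloring `c` is rainbow (injective) on the set `S` of edges. -/
def RainbowOn {V : Type*} (c : Sym2 V → ℕ) (S : Set (Sym2 V)) : Prop :=
  ∀ e₁ ∈ S, ∀ e₂ ∈ S, c e₁ = c e₂ → e₁ = e₂

/-- Let `H` be a graph with at least one edge, let `F` be an edge-colored complete
graph on `n ≥ 5|V(H)|` vertices and `u ≠ v` two of its vertices. If `F - {u, v}` is
rainbow and the edges between `{u, v}` and the remaining vertices receive pairwise
distinct colors, then whatever the color of `uv` is, there is a rainbow copy of `H`
containing the edge `uv`. -/
private lemma digraph_indep {V : Type*} [DecidableEq V] (out : V → Finset V)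
    (hc : ∀ x, (out x).card ≤ 2) (hs : ∀ x, x ∉ out x) (Q : Finset V) :
    ∃ S ⊆ Q, Q.card ≤ 5 * S.card ∧ ∀ x ∈ S, ∀ y ∈ S, y ∉ out x := by
  induction Q using Finset.strongInduction with
  | _ Q ih =>
    rcases Q.eq_empty_or_nonempty with rfl | hQ
    · exact ⟨∅, by simp⟩
    · have hdeg : ∃ q ∈ Q, (out q ∩ Q).card + (Q.filter (fun y => q ∈ out y)).card ≤ 4 := by
        by_contra hno
        push_neg at hno
        have h1 : 5 * Q.card ≤ ∑ q ∈ Q, ((out q ∩ Q).card + (Q.filter (fun y => q ∈ out y)).card) := by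
          calc 5 * Q.card = ∑ _q ∈ Q, 5 := by rw [Finset.sum_const, smul_eq_mul, mul_comm]
          _ ≤ _ := Finset.sum_le_sum (fun q hq => hno q hq)
        have h3 : ∑ q ∈ Q, (Q.filter (fun y => q ∈ out y)).card = ∑ y ∈ Q, (out y ∩ Q).card := by
          simp only [Finset.card_filter]
          rw [Finset.sum_comm]
          refine Finset.sum_congr rfl (fun y _ => ?_)
          rw [← Finset.card_filter, Finset.filter_mem_eq_inter, Finset.inter_comm]
        have h4 : ∑ q ∈ Q, (out q ∩ Q).card ≤ 2 * Q.card := by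
          calc ∑ q ∈ Q, (out q ∩ Q).card ≤ ∑ q ∈ Q, 2 :=
            Finset.sum_le_sum (fun q _ => le_trans (Finset.card_le_card Finset.inter_subset_left) (hc q))
          _ = 2 * Q.card := by rw [Finset.sum_const, smul_eq_mul, mul_comm]
        rw [Finset.sum_add_distrib, h3] at h1
        have hQpos : 0 < Q.card := Finset.card_pos.mpr hQ
        omega
      obtain ⟨q, hqQ, hdq⟩ := hdeg
      set R : Finset V := insert q ((out q ∩ Q) ∪ Q.filter (fun y => q ∈ out y)) with hR
      have hqR : q ∈ R := Finset.mem_insert_self _ _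
      have hRcard : R.card ≤ 5 := by
        refine le_trans (Finset.card_insert_le _ _) ?_
        have := Finset.card_union_le (out q ∩ Q) (Q.filter (fun y => q ∈ out y))
        omega
      have hsub : Q \ R ⊂ Q := by
        rw [Finset.ssubset_iff_of_subset (Finset.sdiff_subset)]
        exact ⟨q, hqQ, fun h => (Finset.mem_sdiff.mp h).2 hqR⟩
      obtain ⟨S', hS'sub, hS'card, hS'ind⟩ := ih (Q \ R) hsub
      have hqS' : q ∉ S' := fun h => (Finset.mem_sdiff.mp (hS'sub h)).2 hqR
      have hS'Q : ∀ z ∈ S', z ∈ Q := fun z hz => (Finset.mem_sdiff.mp (hS'sub hz)).1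
      have hS'R : ∀ z ∈ S', z ∉ R := fun z hz => (Finset.mem_sdiff.mp (hS'sub hz)).2
      refine ⟨insert q S', ?_, ?_, ?_⟩
      · intro x hx
        rcases Finset.mem_insert.mp hx with rfl | hx
        · exact hqQ
        · exact hS'Q x hx
      · rw [Finset.card_insert_of_notMem hqS']
        have hsplit : Q.card ≤ (Q \ R).card + R.card := by
          have h := Finset.card_sdiff_add_card Q R
          have h2 : Q.card ≤ (Q ∪ R).card := Finset.card_le_card Finset.subset_union_left
          omega
        omega
      · have key : ∀ x ∈ insert q S', ∀ y ∈ insert q S', y ∉ out x := by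
          intro x hx y hy
          rcases Finset.mem_insert.mp hx with hxq | hx
          · rcases Finset.mem_insert.mp hy with hyq | hy
            · rw [hxq, hyq]; exact hs q
            · rw [hxq]
              intro hmem
              exact hS'R y hy (Finset.mem_insert_of_mem
                (Finset.mem_union_left _ (Finset.mem_inter.mpr ⟨hmem, hS'Q y hy⟩)))
          · rcases Finset.mem_insert.mp hy with hyq | hy
            · rw [hyq]
              intro hmem
              exact hS'R x hx (Finset.mem_insert_of_mem
                (Finset.mem_union_right _ (Finset.mem_filter.mpr ⟨hS'Q x hx, hmem⟩)))
            · exact hS'ind x hx y hy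
        exact key

theorem rainbow_copy_through_added_edge' {W : Type*} [Fintype W] (H : SimpleGraph W)
    (hH : H.edgeSet.Nonempty) (n : ℕ) (hn : 5 * Fintype.card W ≤ n)
    (c : Sym2 (Fin n) → ℕ) (u v : Fin n) (huv : u ≠ v)
    (h1 : RainbowOn c {e | ¬ e.IsDiag ∧ u ∉ e ∧ v ∉ e})
    (h2 : RainbowOn c {e | ∃ x, x ≠ u ∧ x ≠ v ∧ (e = s(u, x) ∨ e = s(v, x))}) :
    IsRainbowCopyThrough H (⊤ : SimpleGraph (Fin n)) c s(u, v) := by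
  classical
  obtain ⟨e0, he0⟩ := hH
  induction e0 using Sym2.ind with
  | _ a b =>
  rw [SimpleGraph.mem_edgeSet] at he0
  have hab : H.Adj a b := he0
  have hne : a ≠ b := hab.ne
  set k := Fintype.card W with hk
  -- membership in the h1 family
  have hmem1 : ∀ x y : Fin n, x ≠ y → x ≠ u → x ≠ v → y ≠ u → y ≠ v →
      s(x, y) ∈ {e : Sym2 (Fin n) | ¬ e.IsDiag ∧ u ∉ e ∧ v ∉ e} := by
    intro x y hxy hxu hxv hyu hyv
    simp only [Set.mem_setOf_eq, Sym2.mk_isDiag_iff, Sym2.mem_iff]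
    push_neg
    exact ⟨hxy, ⟨Ne.symm hxu, Ne.symm hyu⟩, ⟨Ne.symm hxv, Ne.symm hyv⟩⟩
  -- bad vertices touching colour c s(u,v)
  set B1 : Finset (Fin n) := Finset.univ.filter
    (fun x => x ≠ u ∧ x ≠ v ∧ (c s(u, x) = c s(u, v) ∨ c s(v, x) = c s(u, v))) with hB1def
  set B2 : Finset (Fin n) := Finset.univ.filter
    (fun x => x ≠ u ∧ x ≠ v ∧ ∃ z, z ≠ u ∧ z ≠ v ∧ z ≠ x ∧ c s(x, z) = c s(u, v)) with hB2def
  have hB1card : B1.card ≤ 1 := by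
    rw [Finset.card_le_one]
    intro x hx y hy
    rw [hB1def, Finset.mem_filter] at hx hy
    obtain ⟨-, hxu, hxv, hcx⟩ := hx
    obtain ⟨-, hyu, hyv, hcy⟩ := hy
    have hmx : ∀ w : Fin n, w ≠ u → w ≠ v →
        s(u, w) ∈ {e : Sym2 (Fin n) | ∃ x, x ≠ u ∧ x ≠ v ∧ (e = s(u, x) ∨ e = s(v, x))} :=
      fun w h h' => ⟨w, h, h', Or.inl rfl⟩
    have hmv : ∀ w : Fin n, w ≠ u → w ≠ v →
        s(v, w) ∈ {e : Sym2 (Fin n) | ∃ x, x ≠ u ∧ x ≠ v ∧ (e = s(u, x) ∨ e = s(v, x))} :=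
      fun w h h' => ⟨w, h, h', Or.inr rfl⟩
    rcases hcx with hcx | hcx <;> rcases hcy with hcy | hcy
    · have := h2 _ (hmx x hxu hxv) _ (hmx y hyu hyv) (hcx.trans hcy.symm)
      rcases Sym2.eq_iff.mp this with ⟨-, h⟩ | ⟨h1', h2'⟩
      · exact h
      · exact absurd h2' hxu
    · have := h2 _ (hmx x hxu hxv) _ (hmv y hyu hyv) (hcx.trans hcy.symm)
      rcases Sym2.eq_iff.mp this with ⟨h', -⟩ | ⟨h', h''⟩
      · exact absurd h' huv
      · exact absurd h'' hxv
    · have := h2 _ (hmv x hxu hxv) _ (hmx y hyu hyv) (hcx.trans hcy.symm)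
      rcases Sym2.eq_iff.mp this with ⟨h', -⟩ | ⟨h', h''⟩
      · exact absurd h'.symm huv
      · exact absurd h'' hxu
    · have := h2 _ (hmv x hxu hxv) _ (hmv y hyu hyv) (hcx.trans hcy.symm)
      rcases Sym2.eq_iff.mp this with ⟨-, h⟩ | ⟨h', h''⟩
      · exact h
      · exact absurd h'' hxv
  have hB2card : B2.card ≤ 2 := by
    rcases B2.eq_empty_or_nonempty with h | ⟨x0, hx0⟩
    · simp [h]
    · rw [hB2def, Finset.mem_filter] at hx0
      obtain ⟨-, hx0u, hx0v, z0, hz0u, hz0v, hz0x, hcz0⟩ := hx0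
      have hsub : B2 ⊆ {x0, z0} := by
        intro y hy
        rw [hB2def, Finset.mem_filter] at hy
        obtain ⟨-, hyu, hyv, w, hwu, hwv, hwy, hcw⟩ := hy
        have := h1 _ (hmem1 y w (Ne.symm hwy) hyu hyv hwu hwv) _
          (hmem1 x0 z0 (Ne.symm hz0x) hx0u hx0v hz0u hz0v) (hcw.trans hcz0.symm)
        rcases Sym2.eq_iff.mp this with ⟨h', -⟩ | ⟨h', -⟩ <;>
          simp [Finset.mem_insert, h']
      exact le_trans (Finset.card_le_card hsub)
        (le_trans (Finset.card_insert_le _ _) (by simp))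
  set P : Finset (Fin n) := (Finset.univ \ {u, v}) \ (B1 ∪ B2) with hPdef
  have hPfacts : ∀ x ∈ P, x ≠ u ∧ x ≠ v ∧ x ∉ B1 ∧ x ∉ B2 := by
    intro x hx
    rw [hPdef, Finset.mem_sdiff, Finset.mem_sdiff, Finset.mem_union] at hx
    push_neg at hx
    obtain ⟨⟨-, hx2⟩, hx3, hx4⟩ := hx
    simp only [Finset.mem_insert, Finset.mem_singleton] at hx2
    push_neg at hx2
    exact ⟨hx2.1, hx2.2, hx3, hx4⟩
  have hPcard : n - 5 ≤ P.card := by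
    have h1' : ({u, v} : Finset (Fin n)).card = 2 := by
      rw [Finset.card_insert_of_notMem (by simpa using huv), Finset.card_singleton]
    have h2' : (Finset.univ \ {u, v} : Finset (Fin n)).card = n - 2 := by
      rw [Finset.card_sdiff_of_subset (Finset.subset_univ _), h1', Finset.card_univ, Fintype.card_fin]
    have h3' : (B1 ∪ B2).card ≤ 3 := le_trans (Finset.card_union_le _ _) (by omega)
    have h4' : (Finset.univ \ {u, v} : Finset (Fin n)).card - (B1 ∪ B2).card ≤ P.card := by
      rw [hPdef]; exact Finset.le_card_sdiff _ _
    omega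
  -- the conflict-target function
  have htgt : ∀ (x : Fin n) (col : ℕ), ∃ T : Finset (Fin n), T.card ≤ 1 ∧ x ∉ T ∧
      ∀ y z : Fin n, y ≠ z → y ≠ u → y ≠ v → z ≠ u → z ≠ v → c s(y, z) = col →
        ∃ w ∈ T, w = y ∨ w = z := by
    intro x col
    by_cases h : ∃ p : Fin n × Fin n,
        p.1 ≠ p.2 ∧ p.1 ≠ u ∧ p.1 ≠ v ∧ p.2 ≠ u ∧ p.2 ≠ v ∧ c s(p.1, p.2) = col
    · obtain ⟨⟨y0, z0⟩, hyz0, hy0u, hy0v, hz0u, hz0v, hcol0⟩ := h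
      simp only at hyz0 hy0u hy0v hz0u hz0v hcol0
      have key : ∀ y z : Fin n, y ≠ z → y ≠ u → y ≠ v → z ≠ u → z ≠ v → c s(y, z) = col →
          (y0 = y ∧ z0 = z) ∨ (y0 = z ∧ z0 = y) := by
        intro y z hyz hyu hyv hzu hzv hc'
        exact Sym2.eq_iff.mp (h1 _ (hmem1 y0 z0 hyz0 hy0u hy0v hz0u hz0v) _
          (hmem1 y z hyz hyu hyv hzu hzv) (hcol0.trans hc'.symm))
      by_cases hx : y0 = x
      · refine ⟨{z0}, by simp, by simp only [Finset.mem_singleton]; exact fun h' => hyz0 (hx.trans h'), ?_⟩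
        intro y z hyz hyu hyv hzu hzv hc'
        rcases key y z hyz hyu hyv hzu hzv hc' with ⟨-, h'⟩ | ⟨-, h'⟩
        · exact ⟨z0, Finset.mem_singleton_self _, Or.inr h'⟩
        · exact ⟨z0, Finset.mem_singleton_self _, Or.inl h'⟩
      · refine ⟨{y0}, by simp, by simp only [Finset.mem_singleton]; exact fun h' => hx h'.symm, ?_⟩
        intro y z hyz hyu hyv hzu hzv hc'
        rcases key y z hyz hyu hyv hzu hzv hc' with ⟨h', -⟩ | ⟨h', -⟩
        · exact ⟨y0, Finset.mem_singleton_self _, Or.inl h'⟩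
        · exact ⟨y0, Finset.mem_singleton_self _, Or.inr h'⟩
    · refine ⟨∅, by simp, by simp, ?_⟩
      intro y z hyz hyu hyv hzu hzv hc'
      exact absurd ⟨⟨y, z⟩, hyz, hyu, hyv, hzu, hzv, hc'⟩ h
  choose tgt htgt1 htgt2 htgt3 using htgt
  set out : Fin n → Finset (Fin n) :=
    fun x => tgt x (c s(u, x)) ∪ tgt x (c s(v, x)) with houtdef
  have hout_card : ∀ x, (out x).card ≤ 2 := by
    intro x
    refine le_trans (Finset.card_union_le _ _) ?_
    have := htgt1 x (c s(u, x)); have := htgt1 x (c s(v, x)); omega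
  have hout_self : ∀ x, x ∉ out x := by
    intro x hx
    rcases Finset.mem_union.mp hx with hx | hx
    · exact htgt2 x (c s(u, x)) hx
    · exact htgt2 x (c s(v, x)) hx
  obtain ⟨S, hSP, hScard5, hSind⟩ := digraph_indep out hout_card hout_self P
  have hSfacts : ∀ x ∈ S, x ≠ u ∧ x ≠ v ∧ x ∉ B1 ∧ x ∉ B2 := fun x hx => hPfacts x (hSP hx)
  have hScard : k - 2 ≤ S.card := by omega
  -- the embedding of the remaining vertices
  set T : Finset W := (Finset.univ.erase a).erase b with hTdef
  have hTcard : T.card = k - 2 := by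
    rw [hTdef, Finset.card_erase_of_mem (Finset.mem_erase.mpr ⟨hne.symm, Finset.mem_univ b⟩),
      Finset.card_erase_of_mem (Finset.mem_univ a), Finset.card_univ, ← hk]
    omega
  have hcardle : Fintype.card {x // x ∈ T} ≤ Fintype.card {x // x ∈ S} := by
    rw [Fintype.card_coe, Fintype.card_coe, hTcard]
    exact hScard
  obtain ⟨emb⟩ := Function.Embedding.nonempty_of_card_le hcardle
  have hmemT : ∀ w : W, w ≠ a → w ≠ b → w ∈ T := by
    intro w hwa hwb
    rw [hTdef, Finset.mem_erase, Finset.mem_erase]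
    exact ⟨hwb, hwa, Finset.mem_univ w⟩
  set f : W → Fin n := fun w =>
    if hwa : w = a then u else if hwb : w = b then v
    else (emb ⟨w, hmemT w hwa hwb⟩ : Fin n) with hfdef
  have hfa : f a = u := by rw [hfdef]; simp
  have hfb : f b = v := by rw [hfdef]; simp [hne.symm]
  have hfS : ∀ w : W, w ≠ a → w ≠ b → f w ∈ S := by
    intro w hwa hwb
    rw [hfdef]
    simp only [dif_neg hwa, dif_neg hwb]
    exact Finset.coe_mem _
  have huS : u ∉ S := fun h => (hSfacts u h).1 rfl
  have hvS : v ∉ S := fun h => (hSfacts v h).2.1 rfl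
  have hfinj : Function.Injective f := by
    intro w1 w2 h
    by_cases h1a : w1 = a
    · rw [h1a, hfa] at h
      by_cases h2a : w2 = a
      · exact h1a.trans h2a.symm
      · by_cases h2b : w2 = b
        · rw [h2b, hfb] at h; exact absurd h huv
        · have hm := hfS w2 h2a h2b; rw [← h] at hm; exact absurd hm huS
    · by_cases h1b : w1 = b
      · rw [h1b, hfb] at h
        by_cases h2a : w2 = a
        · rw [h2a, hfa] at h; exact absurd h.symm huv
        · by_cases h2b : w2 = b
          · exact h1b.trans h2b.symm
          · have hm := hfS w2 h2a h2b; rw [← h] at hm; exact absurd hm hvS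
      · by_cases h2a : w2 = a
        · rw [h2a, hfa] at h
          have hm := hfS w1 h1a h1b; rw [h] at hm; exact absurd hm huS
        · by_cases h2b : w2 = b
          · rw [h2b, hfb] at h
            have hm := hfS w1 h1a h1b; rw [h] at hm; exact absurd hm hvS
          · rw [hfdef] at h
            simp only [dif_neg h1a, dif_neg h1b, dif_neg h2a, dif_neg h2b] at h
            exact congrArg Subtype.val (emb.injective (Subtype.coe_injective h))
  have htype : ∀ p q : W, p ≠ q →
      (s(f p, f q) = s(u, v) ∧ s(p, q) = s(a, b)) ∨
      (∃ x ∈ S, (s(f p, f q) = s(u, x) ∨ s(f p, f q) = s(v, x))) ∨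
      (∃ x ∈ S, ∃ y ∈ S, x ≠ y ∧ s(f p, f q) = s(x, y)) := by
    intro p q hpq
    by_cases hpa : p = a
    · by_cases hqb : q = b
      · exact Or.inl ⟨by rw [hpa, hqb, hfa, hfb], by rw [hpa, hqb]⟩
      · have hqa : q ≠ a := fun h => hpq (hpa.trans h.symm)
        exact Or.inr (Or.inl ⟨f q, hfS q hqa hqb, Or.inl (by rw [hpa, hfa])⟩)
    · by_cases hpb : p = b
      · by_cases hqa : q = a
        · refine Or.inl ⟨?_, ?_⟩
          · rw [hpb, hqa, hfa, hfb, Sym2.eq_swap]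
          · rw [hpb, hqa, Sym2.eq_swap]
        · have hqb : q ≠ b := fun h => hpq (hpb.trans h.symm)
          exact Or.inr (Or.inl ⟨f q, hfS q hqa hqb, Or.inr (by rw [hpb, hfb])⟩)
      · by_cases hqa : q = a
        · exact Or.inr (Or.inl ⟨f p, hfS p hpa hpb, Or.inl (by rw [hqa, hfa, Sym2.eq_swap])⟩)
        · by_cases hqb : q = b
          · exact Or.inr (Or.inl ⟨f p, hfS p hpa hpb, Or.inr (by rw [hqb, hfb, Sym2.eq_swap])⟩)
          · exact Or.inr (Or.inr ⟨f p, hfS p hpa hpb, f q, hfS q hqa hqb,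
              fun h => hpq (hfinj h), rfl⟩)
  -- helper: a type-2 edge and a type-3 edge cannot share a colour
  have hcase23 : ∀ (x : Fin n), x ∈ S → ∀ (y z : Fin n), y ∈ S → z ∈ S → y ≠ z →
      (c s(u, x) = c s(y, z) ∨ c s(v, x) = c s(y, z)) → False := by
    intro x hxS y z hyS hzS hyz hcol
    obtain ⟨hyu, hyv, -, -⟩ := hSfacts y hyS
    obtain ⟨hzu, hzv, -, -⟩ := hSfacts z hzS
    rcases hcol with hcol | hcol
    · obtain ⟨w, hwT, hw⟩ := htgt3 x (c s(u, x)) y z hyz hyu hyv hzu hzv hcol.symm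
      have hwS : w ∈ S := by rcases hw with rfl | rfl; exacts [hyS, hzS]
      exact hSind x hxS w hwS (Finset.mem_union_left _ hwT)
    · obtain ⟨w, hwT, hw⟩ := htgt3 x (c s(v, x)) y z hyz hyu hyv hzu hzv hcol.symm
      have hwS : w ∈ S := by rcases hw with rfl | rfl; exacts [hyS, hzS]
      exact hSind x hxS w hwS (Finset.mem_union_right _ hwT)
  -- helper: a type-1 edge and a type-2 edge cannot share a colour
  have hcase12 : ∀ (x : Fin n), x ∈ S →
      (c s(u, v) = c s(u, x) ∨ c s(u, v) = c s(v, x)) → False := by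
    intro x hxS hcol
    obtain ⟨hxu, hxv, hxB1, -⟩ := hSfacts x hxS
    apply hxB1
    rw [hB1def, Finset.mem_filter]
    refine ⟨Finset.mem_univ x, hxu, hxv, ?_⟩
    rcases hcol with hcol | hcol
    · exact Or.inl hcol.symm
    · exact Or.inr hcol.symm
  -- helper: a type-1 edge and a type-3 edge cannot share a colour
  have hcase13 : ∀ (y z : Fin n), y ∈ S → z ∈ S → y ≠ z →
      c s(u, v) = c s(y, z) → False := by
    intro y z hyS hzS hyz hcol
    obtain ⟨hyu, hyv, -, hyB2⟩ := hSfacts y hyS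
    obtain ⟨hzu, hzv, -, -⟩ := hSfacts z hzS
    apply hyB2
    rw [hB2def, Finset.mem_filter]
    exact ⟨Finset.mem_univ y, hyu, hyv, z, hzu, hzv, hyz.symm, hcol.symm⟩
  have hmapinj : ∀ p q p' q' : W, s(f p, f q) = s(f p', f q') → s(p, q) = s(p', q') := by
    intro p q p' q' hpq
    apply Sym2.map.injective hfinj
    rwa [Sym2.map_pair_eq, Sym2.map_pair_eq]
  refine ⟨f, hfinj, ?_, ?_, a, b, hab, by rw [hfa, hfb]⟩
  · intro p q hpq
    exact (SimpleGraph.top_adj (f p) (f q)).mpr (fun h => hpq.ne (hfinj h))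
  · intro p q p' q' hpq hpq' hc
    rcases htype p q hpq.ne with ⟨he1, hs1⟩ | ⟨x, hxS, hx⟩ | ⟨x, hxS, y, hyS, hxy, hx⟩ <;>
      rcases htype p' q' hpq'.ne with ⟨he2, hs2⟩ | ⟨x', hxS', hx'⟩ | ⟨x', hxS', y', hyS', hxy', hx'⟩
    -- (1,1)
    · rw [hs1, hs2]
    -- (1,2)
    · exfalso
      rw [he1] at hc
      rcases hx' with hx' | hx' <;> rw [hx'] at hc
      · exact hcase12 x' hxS' (Or.inl hc)
      · exact hcase12 x' hxS' (Or.inr hc)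
    -- (1,3)
    · exfalso
      rw [he1, hx'] at hc
      exact hcase13 x' y' hxS' hyS' hxy' hc
    -- (2,1)
    · exfalso
      rw [he2] at hc
      rcases hx with hx | hx <;> rw [hx] at hc
      · exact hcase12 x hxS (Or.inl hc.symm)
      · exact hcase12 x hxS (Or.inr hc.symm)
    -- (2,2)
    · obtain ⟨hxu, hxv, -, -⟩ := hSfacts x hxS
      obtain ⟨hxu', hxv', -, -⟩ := hSfacts x' hxS'
      exact hmapinj p q p' q' (h2 _ ⟨x, hxu, hxv, hx⟩ _ ⟨x', hxu', hxv', hx'⟩ hc)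
    -- (2,3)
    · exfalso
      rw [hx'] at hc
      rcases hx with hx | hx <;> rw [hx] at hc
      · exact hcase23 x hxS x' y' hxS' hyS' hxy' (Or.inl hc)
      · exact hcase23 x hxS x' y' hxS' hyS' hxy' (Or.inr hc)
    -- (3,1)
    · exfalso
      rw [he2, hx] at hc
      exact hcase13 x y hxS hyS hxy hc.symm
    -- (3,2)
    · exfalso
      rw [hx] at hc
      rcases hx' with hx' | hx' <;> rw [hx'] at hc
      · exact hcase23 x' hxS' x y hxS hyS hxy (Or.inl hc.symm)
      · exact hcase23 x' hxS' x y hxS hyS hxy (Or.inr hc.symm)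
    -- (3,3)
    · obtain ⟨hxu, hxv, -, -⟩ := hSfacts x hxS
      obtain ⟨hyu, hyv, -, -⟩ := hSfacts y hyS
      obtain ⟨hxu', hxv', -, -⟩ := hSfacts x' hxS'
      obtain ⟨hyu', hyv', -, -⟩ := hSfacts y' hyS'
      have hm1 := hmem1 x y hxy hxu hxv hyu hyv
      have hm2 := hmem1 x' y' hxy' hxu' hxv' hyu' hyv'
      rw [hx, hx'] at hc
      have := h1 _ hm1 _ hm2 hc
      rw [← hx, ← hx'] at this
      exact hmapinj p q p' q' this
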